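/- Let σ be an automorphism of F_q of order m, let λ ∈ F_q^* satisfy σ(λ) = λ, let n be a positive integer, and set d = gcd(m, n). If C ⊆ F_q^n is a skew (σ,λ)-constacyclic code, then C is invariant under the d-th power of the λ-constacyclic shift: T_λ^d(c) ∈ C for every c ∈ C (i.e., C is a quasi-twisted code of index d with shift constant λ). -/

import Mathlib

/-- The skew constacyclic shift `T_{σ,λ}` on `F^n`:
`T_{σ,λ}(c)_0 = λ·σ(c_{n−1})` and `T_{σ,λ}(c)_i = σ(c_{i−1})` for `1 ≤ i ≤ n−1`.
(Here `i - 1` is subtraction in `Fin n`, so `0 - 1 = n - 1`.) -/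
def skewShift {F : Type*} [Field F] {n : ℕ} [NeZero n] (σ : F → F) (lam : F)
    (c : Fin n → F) : Fin n → F :=
  fun i => if i = 0 then lam * σ (c (i - 1)) else σ (c (i - 1))

lemma coe_sub_one' {n : ℕ} [NeZero n] (i : Fin n) :
    ((i - 1 : Fin n) : ℕ) = if i = 0 then n - 1 else (i : ℕ) - 1 := by
  cases n with
  | zero => exact absurd rfl (NeZero.ne 0)
  | succ n => exact Fin.coe_sub_one i

section Aux

open Fin.NatCast

variable {F : Type*} [Field F] {n : ℕ} [NeZero n]

/-- formula for iterates of the identity constacyclic shift, for `k ≤ n`. -/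
lemma skewShift_id_iterate (lam : F) :
    ∀ k, k ≤ n → ∀ (c : Fin n → F) (i : Fin n),
      (skewShift (id : F → F) lam)^[k] c i =
        if (i : ℕ) < k then lam * c (i - (k : Fin n)) else c (i - (k : Fin n)) := by
  intro k
  induction k with
  | zero => intro _ c i; simp
  | succ k ih =>
    intro hk c i
    have hk' : k ≤ n := Nat.le_of_succ_le hk
    rw [Function.iterate_succ_apply']
    have hcast : ((k + 1 : ℕ) : Fin n) = (k : Fin n) + 1 := by push_cast; ring
    by_cases hi : i = 0
    · subst hi
      simp only [skewShift, ih hk', id_eq]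
      have hval : ((0 - 1 : Fin n) : ℕ) = n - 1 := by
        rw [coe_sub_one']; simp
      have hnot : ¬ (((0 : Fin n) - 1 : Fin n) : ℕ) < k := by
        rw [hval]; omega
      rw [if_neg hnot]
      simp only [if_true, Fin.val_zero]
      have hidx0 : (0 : Fin n) - 1 - (k : Fin n) = 0 - ((k : Fin n) + 1) := by
        rw [sub_sub, add_comm]
      rw [hcast, hidx0]; simp
    · have hi1 : ((i - 1 : Fin n) : ℕ) = (i : ℕ) - 1 := by
        rw [coe_sub_one', if_neg hi]
      have hipos : 1 ≤ (i : ℕ) := by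
        rcases Nat.eq_zero_or_pos (i : ℕ) with h | h
        · exact absurd (Fin.ext h) hi
        · exact h
      simp only [skewShift, if_neg hi, id_eq, ih hk']
      have hiff : (((i - 1 : Fin n)) : ℕ) < k ↔ (i : ℕ) < k + 1 := by
        rw [hi1]; omega
      have hidx : i - 1 - (k : Fin n) = i - ((k + 1 : ℕ) : Fin n) := by
        rw [hcast, sub_sub, add_comm]
      by_cases h : (i : ℕ) < k + 1
      · rw [if_pos (hiff.mpr h), if_pos h, hidx]
      · rw [if_neg (fun hh => h (hiff.mp hh)), if_neg h, hidx]

lemma skewShift_id_iterate_n (lam : F) (c : Fin n → F) :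
    (skewShift (id : F → F) lam)^[n] c = lam • c := by
  funext i
  rw [skewShift_id_iterate lam n le_rfl]
  rw [if_pos i.isLt]
  simp [Fin.natCast_self]

lemma skewShift_id_smul (lam a : F) (c : Fin n → F) :
    skewShift (id : F → F) lam (a • c) = a • skewShift (id : F → F) lam c := by
  funext i
  simp only [skewShift, Pi.smul_apply, smul_eq_mul, id_eq]
  split_ifs <;> ring

lemma skewShift_id_iterate_smul (lam a : F) (k : ℕ) (c : Fin n → F) :
    (skewShift (id : F → F) lam)^[k] (a • c) = a • (skewShift (id : F → F) lam)^[k] c := by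
  induction k generalizing c with
  | zero => rfl
  | succ k ih => rw [Function.iterate_succ_apply, Function.iterate_succ_apply,
      skewShift_id_smul, ih]

lemma skewShift_id_iterate_add_mul (lam : F) (a j : ℕ) (c : Fin n → F) :
    (skewShift (id : F → F) lam)^[a + j * n] c = lam ^ j • (skewShift (id : F → F) lam)^[a] c := by
  induction j with
  | zero => simp
  | succ j ih =>
    have : a + (j + 1) * n = (a + j * n) + n := by ring
    rw [this, Function.iterate_add_apply, skewShift_id_iterate_n,
      skewShift_id_iterate_smul, ih, smul_smul, pow_succ']

end Aux

theorem stmt_7 (F : Type*) [Field F] [Fintype F]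
    (σ : F ≃+* F) (m : ℕ) (hm : orderOf σ = m)
    (lam : F) (hlam : lam ≠ 0) (hfix : σ lam = lam)
    (n : ℕ) [NeZero n]
    (C : Submodule F (Fin n → F))
    (hC : ∀ c ∈ C, skewShift (⇑σ) lam c ∈ C) :
    ∀ c ∈ C, (skewShift (id : F → F) lam)^[Nat.gcd m n] c ∈ C := by
  haveI : Finite (F ≃+* F) :=
    Finite.of_injective (fun e : F ≃+* F => (e : F → F)) DFunLike.coe_injective
  have hmpos : 0 < m := hm ▸ orderOf_pos σ
  have hnpos : 0 < n := Nat.pos_of_ne_zero (NeZero.ne n)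
  set S : (Fin n → F) → (Fin n → F) := skewShift (id : F → F) lam with hS
  set T : (Fin n → F) → (Fin n → F) := skewShift (⇑σ) lam with hT
  set P : (Fin n → F) → (Fin n → F) := fun c => (⇑σ) ∘ c with hP
  -- T = S ∘ P and they commute
  have hTP : T = S ∘ P := by
    funext c i
    simp [hT, hS, hP, skewShift]
  have hcomm : Function.Commute S P := by
    intro c
    funext i
    simp only [Function.comp_apply, hS, hP, skewShift, Function.comp]
    split_ifs with h
    · simp [map_mul, hfix]
    · rfl
  -- σ^[m] = id
  have hsig : (⇑σ)^[m] = id := by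
    have h1 : σ ^ m = 1 := hm ▸ pow_orderOf_eq_one σ
    have h2 : (⇑(σ ^ m) : F → F) = (⇑σ)^[m] :=
      hom_coe_pow (fun e : F ≃+* F => ⇑e) rfl (fun _ _ => rfl) σ m
    rw [← h2, h1]; rfl
  have hPm : P^[m] = id := by
    have : ∀ k (c : Fin n → F), P^[k] c = (⇑σ)^[k] ∘ c := by
      intro k
      induction k with
      | zero => intro c; rfl
      | succ k ih =>
        intro c
        rw [Function.iterate_succ_apply, ih, Function.iterate_succ]
        funext i; simp [hP, Function.comp]
    funext c; rw [this m c, hsig]; rfl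
  have hTm : T^[m] = S^[m] := by
    rw [hTP, hcomm.comp_iterate, hPm, Function.comp_id]
  -- Bezout: find k, j with k * m = gcd m n + j * n
  obtain ⟨k, j, hkj⟩ : ∃ k j : ℕ, k * m = Nat.gcd m n + j * n := by
    set g : ℤ := (Nat.gcd m n : ℤ) with hg
    have hbez : g = m * Nat.gcdA m n + n * Nat.gcdB m n := Nat.gcd_eq_gcd_ab m n
    set x : ℤ := Nat.gcdA m n
    set K : ℤ := x % n + n with hK
    have hxmod : 0 ≤ x % n := Int.emod_nonneg x (by exact_mod_cast hnpos.ne')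
    have hKge : (n : ℤ) ≤ K := by omega
    have hdvd : (n : ℤ) ∣ m * K - g := by
      have hx : x % n = x - n * (x / n) := Int.emod_def x n
      rw [hK, hx, hbez]
      ring_nf
      exact ⟨(m : ℤ) * (-(x / n)) + m - Nat.gcdB m n, by ring⟩
    have hgle : g ≤ (n : ℤ) := by
      have : Nat.gcd m n ≤ n := Nat.le_of_dvd hnpos (Nat.gcd_dvd_right m n)
      rw [hg]; exact_mod_cast this
    have hnonneg : 0 ≤ m * K - g := by
      have h1 : (n : ℤ) ≤ m * K := by
        calc (n : ℤ) ≤ K := hKge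
        _ ≤ m * K := le_mul_of_one_le_left (by omega) (by exact_mod_cast hmpos)
      omega
    obtain ⟨J, hJ⟩ := hdvd
    have hJnonneg : 0 ≤ J := by
      by_contra h
      push_neg at h
      have : (n : ℤ) * J < 0 := mul_neg_of_pos_of_neg (by exact_mod_cast hnpos) h
      omega
    refine ⟨K.toNat, J.toNat, ?_⟩
    have hKt : (K.toNat : ℤ) = K := Int.toNat_of_nonneg (by omega)
    have hJt : (J.toNat : ℤ) = J := Int.toNat_of_nonneg hJnonneg
    have : (K.toNat : ℤ) * m = g + J.toNat * n := by
      rw [hKt, hJt]; linear_combination hJ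
    rw [hg] at this
    exact_mod_cast this
  intro c hc
  -- T^[k*m] c ∈ C
  have hTiter : ∀ t, ∀ c ∈ C, T^[t] c ∈ C := by
    intro t
    induction t with
    | zero => intro c hc; exact hc
    | succ t ih =>
      intro c hc
      rw [Function.iterate_succ_apply]
      exact ih _ (hC c hc)
  have h1 : T^[k * m] c ∈ C := hTiter _ c hc
  have h2 : T^[k * m] = S^[k * m] := by
    rw [mul_comm, Function.iterate_mul, hTm, ← Function.iterate_mul, mul_comm]
  rw [h2, hkj, skewShift_id_iterate_add_mul] at h1
  have h3 : S^[Nat.gcd m n] c = (lam ^ j)⁻¹ • (lam ^ j • S^[Nat.gcd m n] c) := by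
    rw [smul_smul, inv_mul_cancel₀ (pow_ne_zero j hlam), one_smul]
  rw [h3]
  exact C.smul_mem _ h1
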